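/- arXiv:1403.7605 — 2 statements merged into one kernel-verified Lean document; each statement's English description precedes it below -/
import Mathlib

section
/- Let G be an n-resource selection game (with nondecreasing, not necessarily continuous, cost functions). Every Nash equilibrium of G is a strong Nash equilibrium. -/
open scoped NNReal

namespace RSG

/-- A consumption profile in an `n`-resource selection game: each nonempty type
`R ⊆ [n]` distributes its mass `μ R` among the resources in `R`. -/
def IsProfile (n : ℕ) (μ : Finset (Fin n) → ℝ≥0) (s : Finset (Fin n) → Fin n → ℝ≥0) : Prop :=
  (∀ R : Finset (Fin n), ∀ j : Fin n, j ∉ R → s R j = 0) ∧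
  (∀ R : Finset (Fin n), R.Nonempty → ∑ j ∈ R, s R j = μ R)

/-- The load on resource `j` in profile `s`. -/
def load (n : ℕ) (s : Finset (Fin n) → Fin n → ℝ≥0) (j : Fin n) : ℝ≥0 :=
  ∑ R : Finset (Fin n), s R j

/-- The cost of resource `j` in profile `s`. -/
def cost (n : ℕ) (f : Fin n → ℝ≥0 → ℝ) (s : Finset (Fin n) → Fin n → ℝ≥0) (j : Fin n) : ℝ :=
  f j (load n s j)

/-- A Nash equilibrium. -/
def IsNash (n : ℕ) (f : Fin n → ℝ≥0 → ℝ) (μ : Finset (Fin n) → ℝ≥0)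
    (s : Finset (Fin n) → Fin n → ℝ≥0) : Prop :=
  IsProfile n μ s ∧
  ∀ R : Finset (Fin n), ∀ k ∈ R, 0 < s R k → ∀ j ∈ R, cost n f s k ≤ cost n f s j

/-- A strong Nash equilibrium: a Nash equilibrium `s` such that there is no
consumption profile `s' ≠ s` in which every player who strictly increases its
consumption of some resource `k` (i.e. `s' R k > s R k`) pays, at `k` in `s'`,
strictly less than the common equilibrium cost `h^R` of its type
(expressed via: less than `cost s j` for every `j` in the support of `s R`). -/
def IsStrong (n : ℕ) (f : Fin n → ℝ≥0 → ℝ) (μ : Finset (Fin n) → ℝ≥0)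
    (s : Finset (Fin n) → Fin n → ℝ≥0) : Prop :=
  IsNash n f μ s ∧
  ¬ ∃ s' : Finset (Fin n) → Fin n → ℝ≥0, IsProfile n μ s' ∧ s' ≠ s ∧
    ∀ R : Finset (Fin n), ∀ k : Fin n, s R k < s' R k →
      ∀ j : Fin n, 0 < s R j → cost n f s' k < cost n f s j

end RSG

open RSG

/-- In every `n`-resource selection game (nondecreasing, not
necessarily continuous, cost functions), every Nash equilibrium is strong. -/
theorem nash_is_strong (n : ℕ) (f : Fin n → ℝ≥0 → ℝ)
    (μ : Finset (Fin n) → ℝ≥0) (hmono : ∀ j, Monotone (f j))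
    (s : Finset (Fin n) → Fin n → ℝ≥0) (hs : IsNash n f μ s) :
    IsStrong n f μ s := by
  refine ⟨hs, ?_⟩
  rintro ⟨s', ⟨hz', hsum'⟩, hne, hdev⟩
  obtain ⟨⟨hz, hsum⟩, hnash⟩ := hs
  -- Key: if some type strictly increases consumption of k, then load of k strictly drops.
  have key : ∀ R k, s R k < s' R k → load n s' k < load n s k := by
    intro R k hk
    have hkR : k ∈ R := by
      by_contra h
      rw [hz' R k h] at hk
      exact absurd hk (by simp)
    have hμ : 0 < μ R := by
      calc 0 < s' R k := lt_of_le_of_lt (zero_le) hk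
        _ ≤ ∑ j ∈ R, s' R j := Finset.single_le_sum (fun _ _ => zero_le) hkR
        _ = μ R := hsum' R ⟨k, hkR⟩
    obtain ⟨j, hjR, hj⟩ : ∃ j ∈ R, 0 < s R j := by
      by_contra h
      push_neg at h
      have h0 : ∑ j ∈ R, s R j = 0 :=
        Finset.sum_eq_zero fun j hj => le_antisymm (h j hj) (zero_le)
      rw [hsum R ⟨k, hkR⟩] at h0
      exact hμ.ne' h0
    have h3 : cost n f s' k < cost n f s k :=
      lt_of_lt_of_le (hdev R k hk j hj) (hnash R j hjR hj k hkR)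
    by_contra h
    push_neg at h
    exact absurd (hmono k h) (not_le.mpr h3)
  -- All loads weakly decrease.
  have hle : ∀ k, load n s' k ≤ load n s k := by
    intro k
    by_contra h
    push_neg at h
    obtain ⟨R, hR⟩ : ∃ R, s R k < s' R k := by
      by_contra h2
      push_neg at h2
      exact absurd (Finset.sum_le_sum fun R _ => h2 R) (not_le.mpr h)
    exact absurd (key R k hR).le (not_le.mpr h)
  -- Some consumption strictly increases somewhere.
  obtain ⟨R₀, k₀, hk₀⟩ : ∃ R k, s R k < s' R k := by
    obtain ⟨R, hR⟩ := Function.ne_iff.mp hne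
    obtain ⟨k, hk⟩ := Function.ne_iff.mp hR
    rcases lt_or_gt_of_ne hk with h | h
    · -- s' R k < s R k : find some j in R with increase
      have hkR : k ∈ R := by
        by_contra hmem
        rw [hz R k hmem] at h
        exact absurd h (by simp)
      by_contra h2
      push_neg at h2
      have hlt : ∑ j ∈ R, s' R j < ∑ j ∈ R, s R j :=
        Finset.sum_lt_sum (fun j _ => h2 R j) ⟨k, hkR, h⟩
      rw [hsum' R ⟨k, hkR⟩, hsum R ⟨k, hkR⟩] at hlt
      exact lt_irrefl _ hlt
    · exact ⟨R, k, h⟩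
  -- Total loads are equal, contradiction.
  have hsame : ∀ R : Finset (Fin n), ∑ k, s' R k = ∑ k, s R k := by
    intro R
    rcases R.eq_empty_or_nonempty with h | h
    · subst h
      rw [Finset.sum_eq_zero fun k _ => hz' ∅ k (by simp),
          Finset.sum_eq_zero fun k _ => hz ∅ k (by simp)]
    · rw [← Finset.sum_subset (Finset.subset_univ R) (fun k _ hk => hz' R k hk),
          ← Finset.sum_subset (Finset.subset_univ R) (fun k _ hk => hz R k hk),
          hsum' R h, hsum R h]
  have htot : ∑ k, load n s' k = ∑ k, load n s k := by
    unfold load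
    rw [Finset.sum_comm, Finset.sum_comm (γ := Fin n)]
    exact Finset.sum_congr rfl fun R _ => hsame R
  have hstrict : ∑ k, load n s' k < ∑ k, load n s k :=
    Finset.sum_lt_sum (fun k _ => hle k) ⟨k₀, Finset.mem_univ _, key R₀ k₀ hk₀⟩
  exact absurd htot hstrict.ne
end

section
/- Let n ∈ ℕ, let f_1, …, f_n : ℝ≥0 → ℝ be continuous nondecreasing functions, fix a nonempty R₀ ⊆ {1,…,n} and masses μ^R ≥ 0 for every nonempty R ⊆ {1,…,n} with R ≠ R₀, and for each μ ≥ 0 let G_μ be the resource selection game with these data and with the mass of type R₀ equal to μ. Fix j ∈ {1,…,n} and let H_j(μ) denote the cost h_j^s of resource j in any Nash equilibrium s of G_μ (this value exists and is independent of the choice of Nash equilibrium). Then: (a) H_j : ℝ≥0 → ℝ is continuous and nondecreasing; (b) if moreover f_j is Lipschitz with constant K, then H_j is Lipschitz with constant K. -/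
open scoped NNReal

open RSG

section Aux

open Finset

variable {n : ℕ} {f : Fin n → ℝ≥0 → ℝ}

lemma le_load (s : Finset (Fin n) → Fin n → ℝ≥0) (R : Finset (Fin n)) (j : Fin n) :
    s R j ≤ load n s j := by
  unfold load
  exact Finset.single_le_sum (f := fun R => s R j) (fun _ _ => zero_le) (Finset.mem_univ R)

lemma mem_of_pos {μ : Finset (Fin n) → ℝ≥0} {s} (hs : IsProfile n μ s) {R : Finset (Fin n)}
    {i : Fin n} (h : 0 < s R i) : i ∈ R := by
  by_contra hj
  rw [hs.1 R i hj] at h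
  exact lt_irrefl _ h

lemma sum_eq_inter {s : Finset (Fin n) → Fin n → ℝ≥0} {μ : Finset (Fin n) → ℝ≥0}
    (hs : IsProfile n μ s) (R : Finset (Fin n)) (A : Finset (Fin n)) :
    ∑ i ∈ A, s R i = ∑ i ∈ R ∩ A, s R i := by
  refine (Finset.sum_subset (Finset.inter_subset_right) ?_).symm
  intro x hxA hx
  exact hs.1 R x (fun hxR => hx (Finset.mem_inter.2 ⟨hxR, hxA⟩))

lemma cost_mono (hmono : ∀ j, Monotone (f j)) {μ μ' : Finset (Fin n) → ℝ≥0}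
    {s s' : Finset (Fin n) → Fin n → ℝ≥0}
    (hs : IsNash n f μ s) (hs' : IsNash n f μ' s')
    (hμ : ∀ R : Finset (Fin n), R.Nonempty → μ R ≤ μ' R) (j : Fin n) :
    cost n f s j ≤ cost n f s' j := by
  classical
  by_contra hj
  push_neg at hj
  set A : Finset (Fin n) := Finset.univ.filter (fun i => cost n f s' i < cost n f s i) with hA
  have hjA : j ∈ A := by simp [hA, hj]
  have hload : ∀ i ∈ A, load n s' i < load n s i := by
    intro i hi
    simp only [hA, Finset.mem_filter] at hi
    by_contra h
    push_neg at h
    exact absurd (hmono i h) (not_le.2 hi.2)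
  have hsum : ∑ i ∈ A, load n s' i < ∑ i ∈ A, load n s i :=
    Finset.sum_lt_sum_of_nonempty ⟨j, hjA⟩ hload
  have e1 : ∑ i ∈ A, load n s' i = ∑ R : Finset (Fin n), ∑ i ∈ A, s' R i := by
    simp only [load]; rw [Finset.sum_comm]
  have e2 : ∑ i ∈ A, load n s i = ∑ R : Finset (Fin n), ∑ i ∈ A, s R i := by
    simp only [load]; rw [Finset.sum_comm]
  rw [e1, e2] at hsum
  obtain ⟨R, -, hR⟩ := Finset.exists_lt_of_sum_lt hsum
  obtain ⟨i, hiA, hi⟩ : ∃ i ∈ A, s' R i < s R i := by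
    by_contra h
    push_neg at h
    exact absurd (Finset.sum_le_sum h) (not_le.2 hR)
  have hiR : i ∈ R := mem_of_pos hs.1 (lt_of_le_of_lt (zero_le) hi)
  have hRne : R.Nonempty := ⟨i, hiR⟩
  obtain ⟨k, hk, hks⟩ : ∃ k ∈ R \ A, s R k < s' R k := by
    by_contra h
    push_neg at h
    have h1 : ∑ x ∈ R ∩ A, s' R x < ∑ x ∈ R ∩ A, s R x := by
      rwa [← sum_eq_inter hs'.1, ← sum_eq_inter hs.1]
    have h2 : ∑ x ∈ R \ A, s' R x ≤ ∑ x ∈ R \ A, s R x :=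
      Finset.sum_le_sum h
    have h3 : μ' R < μ R := by
      rw [← hs.1.2 R hRne, ← hs'.1.2 R hRne, ← Finset.sum_inter_add_sum_sdiff R A (s R ·),
        ← Finset.sum_inter_add_sum_sdiff R A (s' R ·)]
      exact add_lt_add_of_lt_of_le h1 h2
    exact absurd (hμ R hRne) (not_le.2 h3)
  have hkR : k ∈ R := (Finset.mem_sdiff.1 hk).1
  have hkA : k ∉ A := (Finset.mem_sdiff.1 hk).2
  have hkc : cost n f s k ≤ cost n f s' k := by
    by_contra h
    exact hkA (by simp [hA]; exact not_le.1 h)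
  have hiA' : cost n f s' i < cost n f s i := by
    simp only [hA, Finset.mem_filter] at hiA; exact hiA.2
  have c1 : cost n f s i ≤ cost n f s k := hs.2 R i hiR (lt_of_le_of_lt (zero_le) hi) k hkR
  have c3 : cost n f s' k ≤ cost n f s' i := hs'.2 R k hkR (lt_of_le_of_lt (zero_le) hks) i hiR
  exact absurd (c1.trans (hkc.trans c3)) (not_le.2 hiA')

lemma load_bound (hmono : ∀ j, Monotone (f j)) {μ : Finset (Fin n) → ℝ≥0}
    {R₀ : Finset (Fin n)} {m m' : ℝ≥0} (hm : m ≤ m')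
    {s s' : Finset (Fin n) → Fin n → ℝ≥0}
    (hs : IsNash n f (Function.update μ R₀ m) s)
    (hs' : IsNash n f (Function.update μ R₀ m') s') {j : Fin n}
    (hj : cost n f s j < cost n f s' j) :
    load n s j ≤ load n s' j ∧ load n s' j ≤ load n s j + (m' - m) := by
  classical
  set Δ : ℝ≥0 := m' - m with hΔ
  set A : Finset (Fin n) := Finset.univ.filter (fun i => cost n f s i < cost n f s' i) with hA
  have hjA : j ∈ A := by simp [hA, hj]
  have hload : ∀ i ∈ A, load n s i < load n s' i := by
    intro i hi
    simp only [hA, Finset.mem_filter] at hi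
    by_contra h
    push_neg at h
    exact absurd (hmono i h) (not_le.2 hi.2)
  set ind : Finset (Fin n) → ℝ≥0 := fun R => if R = R₀ then Δ else 0 with hind
  have hupd : ∀ R : Finset (Fin n),
      Function.update μ R₀ m' R = Function.update μ R₀ m R + ind R := by
    intro R
    by_cases h : R = R₀
    · subst h
      simp only [hind, if_pos rfl, Function.update_self, hΔ]
      rw [add_comm, tsub_add_cancel_of_le hm]
    · simp [hind, h, Function.update_of_ne h]
  have key : ∑ i ∈ A, load n s' i ≤ ∑ i ∈ A, load n s i + Δ := by
    by_contra hk
    push_neg at hk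
    have e1 : ∑ i ∈ A, load n s' i = ∑ R : Finset (Fin n), ∑ i ∈ A, s' R i := by
      simp only [load]; rw [Finset.sum_comm]
    have e2 : ∑ i ∈ A, load n s i + Δ
        = ∑ R : Finset (Fin n), (∑ i ∈ A, s R i + ind R) := by
      rw [Finset.sum_add_distrib]
      congr 1
      · simp only [load]; rw [Finset.sum_comm]
      · simp [hind]
    rw [e1, e2] at hk
    obtain ⟨R, -, hR⟩ := Finset.exists_lt_of_sum_lt hk
    obtain ⟨i, hiA, hi⟩ : ∃ i ∈ A, s R i < s' R i := by
      by_contra h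
      push_neg at h
      exact absurd ((Finset.sum_le_sum h).trans le_self_add) (not_le.2 hR)
    have hiR : i ∈ R := mem_of_pos hs'.1 (lt_of_le_of_lt (zero_le) hi)
    have hRne : R.Nonempty := ⟨i, hiR⟩
    obtain ⟨k, hk2, hks⟩ : ∃ k ∈ R \ A, s' R k < s R k := by
      by_contra h
      push_neg at h
      have h1 : ∑ x ∈ R ∩ A, s R x + ind R < ∑ x ∈ R ∩ A, s' R x := by
        rwa [← sum_eq_inter hs'.1, ← sum_eq_inter hs.1]
      have h2 : ∑ x ∈ R \ A, s R x ≤ ∑ x ∈ R \ A, s' R x :=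
        Finset.sum_le_sum h
      have h3 : Function.update μ R₀ m R + ind R < Function.update μ R₀ m' R := by
        rw [← hs.1.2 R hRne, ← hs'.1.2 R hRne, ← Finset.sum_inter_add_sum_sdiff R A (s R ·),
          ← Finset.sum_inter_add_sum_sdiff R A (s' R ·), add_right_comm]
        exact add_lt_add_of_lt_of_le h1 h2
      rw [hupd R] at h3
      exact lt_irrefl _ h3
    have hkR : k ∈ R := (Finset.mem_sdiff.1 hk2).1
    have hkA : k ∉ A := (Finset.mem_sdiff.1 hk2).2
    have hkc : cost n f s' k ≤ cost n f s k := by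
      by_contra h
      exact hkA (by simp [hA]; exact not_le.1 h)
    have hiA' : cost n f s i < cost n f s' i := by
      simp only [hA, Finset.mem_filter] at hiA; exact hiA.2
    have c1 : cost n f s' i ≤ cost n f s' k :=
      hs'.2 R i hiR (lt_of_le_of_lt (zero_le) hi) k hkR
    have c3 : cost n f s k ≤ cost n f s i :=
      hs.2 R k hkR (lt_of_le_of_lt (zero_le) hks) i hiR
    exact absurd (c1.trans (hkc.trans c3)) (not_le.2 hiA')
  refine ⟨(hload j hjA).le, ?_⟩
  have e3 : ∑ i ∈ A, load n s' i = load n s' j + ∑ i ∈ A.erase j, load n s' i :=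
    (Finset.add_sum_erase A _ hjA).symm
  have e4 : ∑ i ∈ A, load n s i = load n s j + ∑ i ∈ A.erase j, load n s i :=
    (Finset.add_sum_erase A _ hjA).symm
  have e5 : ∑ i ∈ A.erase j, load n s i ≤ ∑ i ∈ A.erase j, load n s' i :=
    Finset.sum_le_sum fun i hi => (hload i (Finset.mem_of_mem_erase hi)).le
  rw [e3, e4] at key
  have key2 : load n s' j + ∑ i ∈ A.erase j, load n s' i
      ≤ (load n s j + Δ) + ∑ i ∈ A.erase j, load n s' i := by
    calc load n s' j + ∑ i ∈ A.erase j, load n s' i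
        ≤ load n s j + ∑ i ∈ A.erase j, load n s i + Δ := key
      _ ≤ (load n s j + Δ) + ∑ i ∈ A.erase j, load n s' i := by
          rw [add_right_comm]
          exact add_le_add_right e5 _
  exact le_of_add_le_add_right key2

noncomputable def prim (g : ℝ≥0 → ℝ) (x : ℝ≥0) : ℝ :=
  ∫ t in (0:ℝ)..(x:ℝ), g (Real.toNNReal t)

lemma prim_continuous {g : ℝ≥0 → ℝ} (hg : Continuous g) : Continuous (prim g) := by
  have hgc : Continuous fun t : ℝ => g (Real.toNNReal t) := hg.comp continuous_real_toNNReal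
  have h := intervalIntegral.continuous_primitive (μ := MeasureTheory.volume)
    (fun a b => hgc.intervalIntegrable a b) (0 : ℝ)
  exact h.comp NNReal.continuous_coe

lemma prim_sub {g : ℝ≥0 → ℝ} (hg : Continuous g) {a b : ℝ≥0} :
    prim g b - prim g a = ∫ t in (a:ℝ)..(b:ℝ), g (Real.toNNReal t) := by
  have hgc : Continuous fun t : ℝ => g (Real.toNNReal t) := hg.comp continuous_real_toNNReal
  rw [prim, prim, ← intervalIntegral.integral_add_adjacent_intervals
    (hgc.intervalIntegrable 0 a) (hgc.intervalIntegrable a b)]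
  ring

lemma prim_sub_le {g : ℝ≥0 → ℝ} (hg : Continuous g) (hmg : Monotone g) {a b : ℝ≥0}
    (hab : a ≤ b) : prim g b - prim g a ≤ ((b : ℝ) - a) * g b := by
  have hgc : Continuous fun t : ℝ => g (Real.toNNReal t) := hg.comp continuous_real_toNNReal
  rw [prim_sub hg]
  have h := intervalIntegral.integral_mono_on (μ := MeasureTheory.volume)
    (f := fun t : ℝ => g (Real.toNNReal t)) (g := fun _ : ℝ => g b)
    (NNReal.coe_le_coe.2 hab) (hgc.intervalIntegrable _ _)
    (intervalIntegrable_const) ?_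
  · simpa [mul_comm] using h
  · intro x hx
    exact hmg (Real.toNNReal_le_iff_le_coe.2 hx.2)

lemma le_prim_sub {g : ℝ≥0 → ℝ} (hg : Continuous g) (hmg : Monotone g) {a b : ℝ≥0}
    (hab : a ≤ b) : ((b : ℝ) - a) * g a ≤ prim g b - prim g a := by
  have hgc : Continuous fun t : ℝ => g (Real.toNNReal t) := hg.comp continuous_real_toNNReal
  rw [prim_sub hg]
  have h := intervalIntegral.integral_mono_on (μ := MeasureTheory.volume)
    (f := fun _ : ℝ => g a) (g := fun t : ℝ => g (Real.toNNReal t))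
    (NNReal.coe_le_coe.2 hab) (intervalIntegrable_const)
    (hgc.intervalIntegrable _ _) ?_
  · simpa [mul_comm] using h
  · intro x hx
    refine hmg ?_
    rw [Real.le_toNNReal_iff_coe_le (le_trans a.coe_nonneg hx.1)]
    exact hx.1

lemma exists_nash (hmono : ∀ i, Monotone (f i)) (hcont : ∀ i, Continuous (f i))
    (μ : Finset (Fin n) → ℝ≥0) : ∃ s, IsNash n f μ s := by
  classical
  set D : Set (Finset (Fin n) → Fin n → ℝ≥0) := {s | IsProfile n μ s} with hD
  -- nonempty
  have hDne : D.Nonempty := by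
    refine ⟨fun R i => if h : R.Nonempty then (if i = R.min' h then μ R else 0) else 0, ?_, ?_⟩
    · intro R i hi
      by_cases h : R.Nonempty
      · simp only [dif_pos h]
        rw [if_neg]
        intro he
        exact hi (he ▸ R.min'_mem h)
      · simp [dif_neg h]
    · intro R h
      simp only [dif_pos h]
      rw [Finset.sum_ite_eq' R (R.min' h) (fun _ => μ R), if_pos (R.min'_mem h)]
  -- compact
  have hDsub : D ⊆ Set.univ.pi fun R => Set.univ.pi fun _ : Fin n => Set.Icc 0 (μ R) := by
    intro s hs R _hR i _hi
    refine ⟨zero_le, ?_⟩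
    by_cases hiR : i ∈ R
    · have hRne : R.Nonempty := ⟨i, hiR⟩
      rw [← hs.2 R hRne]
      exact Finset.single_le_sum (f := fun x => s R x) (fun _ _ => zero_le) hiR
    · rw [hs.1 R i hiR]
      exact zero_le
  have hDclosed : IsClosed D := by
    have h1 : IsClosed {s : Finset (Fin n) → Fin n → ℝ≥0 |
        ∀ R : Finset (Fin n), ∀ i : Fin n, i ∉ R → s R i = 0} := by
      have : {s : Finset (Fin n) → Fin n → ℝ≥0 |
          ∀ R : Finset (Fin n), ∀ i : Fin n, i ∉ R → s R i = 0}
          = ⋂ (R : Finset (Fin n)) (i : Fin n) (_ : i ∉ R), {s | s R i = 0} := by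
        ext s; simp
      rw [this]
      refine isClosed_iInter fun R => isClosed_iInter fun i => isClosed_iInter fun _ => ?_
      exact isClosed_eq (by fun_prop) continuous_const
    have h2 : IsClosed {s : Finset (Fin n) → Fin n → ℝ≥0 |
        ∀ R : Finset (Fin n), R.Nonempty → ∑ i ∈ R, s R i = μ R} := by
      have : {s : Finset (Fin n) → Fin n → ℝ≥0 |
          ∀ R : Finset (Fin n), R.Nonempty → ∑ i ∈ R, s R i = μ R}
          = ⋂ (R : Finset (Fin n)) (_ : R.Nonempty), {s | ∑ i ∈ R, s R i = μ R} := by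
        ext s; simp
      rw [this]
      refine isClosed_iInter fun R => isClosed_iInter fun _ => ?_
      refine isClosed_eq ?_ continuous_const
      exact continuous_finset_sum R fun i _ => by fun_prop
    exact h1.inter h2
  have hDcmp : IsCompact D := by
    refine IsCompact.of_isClosed_subset ?_ hDclosed hDsub
    exact isCompact_univ_pi fun R => isCompact_univ_pi fun _ => isCompact_Icc
  -- potential
  set Φ : (Finset (Fin n) → Fin n → ℝ≥0) → ℝ :=
    fun s => ∑ i : Fin n, prim (f i) (load n s i) with hΦ
  have hΦc : Continuous Φ := by
    refine continuous_finset_sum _ fun i _ => ?_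
    exact (prim_continuous (hcont i)).comp (continuous_finset_sum _ fun R _ => by fun_prop)
  obtain ⟨s, hsD, hsmin⟩ := hDcmp.exists_isMinOn hDne hΦc.continuousOn
  refine ⟨s, hsD, ?_⟩
  intro R k hkR hk i hiR
  by_contra hc
  push_neg at hc
  simp only [cost] at hc
  have hik : i ≠ k := by rintro rfl; exact lt_irrefl _ hc
  set ℓk := load n s k with hℓk
  set ℓi := load n s i with hℓi
  set g2 : ℝ := (f k ℓk - f i ℓi) / 2 with hg2
  have g2pos : 0 < g2 := by rw [hg2]; linarith
  obtain ⟨δk, hδk0, hδk⟩ := Metric.continuousAt_iff.1 (hcont k).continuousAt g2 g2pos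
  obtain ⟨δi, hδi0, hδi⟩ := Metric.continuousAt_iff.1 (hcont i).continuousAt g2 g2pos
  set ε : ℝ≥0 := min (s R k) (min (Real.toNNReal (δk / 2)) (Real.toNNReal (δi / 2))) with hε
  have hε0 : 0 < ε := lt_min hk (lt_min (Real.toNNReal_pos.2 (by linarith))
    (Real.toNNReal_pos.2 (by linarith)))
  have hεk : ε ≤ s R k := min_le_left _ _
  have hεℓk : ε ≤ ℓk := hεk.trans (le_load s R k)
  have hεδk : (ε : ℝ) < δk := by
    have h1 : ε ≤ Real.toNNReal (δk / 2) := le_trans (min_le_right _ _) (min_le_left _ _)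
    have h2 : (ε : ℝ) ≤ δk / 2 := by
      calc (ε : ℝ) ≤ (Real.toNNReal (δk / 2) : ℝ) := NNReal.coe_le_coe.2 h1
        _ = δk / 2 := Real.coe_toNNReal _ (by linarith)
    linarith
  have hεδi : (ε : ℝ) < δi := by
    have h1 : ε ≤ Real.toNNReal (δi / 2) := le_trans (min_le_right _ _) (min_le_right _ _)
    have h2 : (ε : ℝ) ≤ δi / 2 := by
      calc (ε : ℝ) ≤ (Real.toNNReal (δi / 2) : ℝ) := NNReal.coe_le_coe.2 h1
        _ = δi / 2 := Real.coe_toNNReal _ (by linarith)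
    linarith
  have dk : dist (ℓk - ε) ℓk < δk := by
    rw [NNReal.dist_eq, NNReal.coe_sub hεℓk]
    rw [show (ℓk : ℝ) - ε - ℓk = -ε by ring, abs_neg, abs_of_nonneg ε.coe_nonneg]
    exact hεδk
  have di : dist (ℓi + ε) ℓi < δi := by
    rw [NNReal.dist_eq, NNReal.coe_add]
    rw [show (ℓi : ℝ) + ε - ℓi = (ε : ℝ) by ring, abs_of_nonneg ε.coe_nonneg]
    exact hεδi
  have fk_lb : f k ℓk - g2 < f k (ℓk - ε) := by
    have := hδk dk
    rw [Real.dist_eq, abs_sub_lt_iff] at this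
    linarith [this.2]
  have fi_ub : f i (ℓi + ε) < f i ℓi + g2 := by
    have := hδi di
    rw [Real.dist_eq, abs_sub_lt_iff] at this
    linarith [this.1]
  have keylt : f i (ℓi + ε) < f k (ℓk - ε) := by
    rw [hg2] at fk_lb fi_ub
    linarith
  -- perturbed profile
  set v : Fin n → ℝ≥0 :=
    Function.update (Function.update (s R) k (s R k - ε)) i (s R i + ε) with hv
  set s1 := Function.update s R v with hs1e
  have vk : v k = s R k - ε := by
    rw [hv, Function.update_of_ne (Ne.symm hik), Function.update_self]
  have vi : v i = s R i + ε := by rw [hv, Function.update_self]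
  have velse : ∀ x, x ≠ i → x ≠ k → v x = s R x := by
    intro x hxi hxk
    rw [hv, Function.update_of_ne hxi, Function.update_of_ne hxk]
  have s1R : s1 R = v := by rw [hs1e, Function.update_self]
  have s1ne : ∀ R', R' ≠ R → s1 R' = s R' := by
    intro R' h
    rw [hs1e, Function.update_of_ne h]
  have hs1D : s1 ∈ D := by
    constructor
    · intro R' x hx
      by_cases h : R' = R
      · subst h
        rw [s1R, velse x (fun he => hx (he ▸ hiR)) (fun he => hx (he ▸ hkR))]
        exact hsD.1 R' x hx
      · rw [s1ne R' h]
        exact hsD.1 R' x hx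
    · intro R' hR'ne
      by_cases h : R' = R
      · subst h
        rw [s1R]
        rw [Finset.sum_update_of_mem hiR,
          Finset.sum_update_of_mem (Finset.mem_sdiff.2 ⟨hkR, by simp [Ne.symm hik]⟩),
          ← Finset.erase_eq, ← Finset.erase_eq]
        rw [← hsD.2 R' hR'ne, ← Finset.add_sum_erase R' (s R') hiR,
          ← Finset.add_sum_erase (R'.erase i) (s R')
            (Finset.mem_erase.2 ⟨Ne.symm hik, hkR⟩)]
        rw [add_assoc, ← add_assoc (ε : ℝ≥0), add_tsub_cancel_of_le hεk]
      · rw [s1ne R' h]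
        exact hsD.2 R' hR'ne
  -- loads of s1
  have loadgen : ∀ x : Fin n,
      load n s1 x = v x + ∑ R' ∈ Finset.univ.erase R, s R' x := by
    intro x
    have e : ∀ R' : Finset (Fin n), s1 R' x = Function.update (fun T => s T x) R (v x) R' := by
      intro R'
      by_cases h : R' = R
      · subst h; rw [s1R, Function.update_self]
      · rw [s1ne R' h, Function.update_of_ne h]
    unfold load
    rw [Finset.sum_congr rfl (fun R' _ => e R'), Finset.sum_update_of_mem (Finset.mem_univ R),
      ← Finset.erase_eq]
  have loadold : ∀ x : Fin n,
      load n s x = s R x + ∑ R' ∈ Finset.univ.erase R, s R' x := by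
    intro x
    exact (Finset.add_sum_erase _ _ (Finset.mem_univ R)).symm
  have lk1 : load n s1 k = ℓk - ε := by
    rw [loadgen k, vk, hℓk, loadold k, tsub_add_eq_add_tsub hεk]
  have li1 : load n s1 i = ℓi + ε := by
    rw [loadgen i, vi, hℓi, loadold i, add_right_comm]
  have lx1 : ∀ x : Fin n, x ≠ i → x ≠ k → load n s1 x = load n s x := by
    intro x hxi hxk
    rw [loadgen x, velse x hxi hxk, loadold x]
  -- potential decreases
  have esum : ∀ t : Finset (Fin n) → Fin n → ℝ≥0,
      ∑ x : Fin n, prim (f x) (load n t x)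
        = prim (f i) (load n t i) + (prim (f k) (load n t k)
          + ∑ x ∈ (Finset.univ.erase i).erase k, prim (f x) (load n t x)) := by
    intro t
    rw [← Finset.add_sum_erase _ _ (Finset.mem_univ i),
      ← Finset.add_sum_erase _ _ (Finset.mem_erase.2 ⟨Ne.symm hik, Finset.mem_univ k⟩)]
  have erest : ∑ x ∈ (Finset.univ.erase i).erase k, prim (f x) (load n s1 x)
      = ∑ x ∈ (Finset.univ.erase i).erase k, prim (f x) (load n s x) := by
    refine Finset.sum_congr rfl fun x hx => ?_
    rw [lx1 x (Finset.mem_erase.1 (Finset.mem_of_mem_erase hx)).1 (Finset.mem_erase.1 hx).1]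
  have b1 : prim (f i) (ℓi + ε) - prim (f i) ℓi ≤ (ε : ℝ) * f i (ℓi + ε) := by
    have h := prim_sub_le (hcont i) (hmono i) (le_self_add : ℓi ≤ ℓi + ε)
    have e : ((ℓi + ε : ℝ≥0) : ℝ) - (ℓi : ℝ) = (ε : ℝ) := by push_cast; ring
    rwa [e] at h
  have b2 : (ε : ℝ) * f k (ℓk - ε) ≤ prim (f k) ℓk - prim (f k) (ℓk - ε) := by
    have h := le_prim_sub (hcont k) (hmono k) (tsub_le_self : ℓk - ε ≤ ℓk)
    have e : (ℓk : ℝ) - ((ℓk - ε : ℝ≥0) : ℝ) = (ε : ℝ) := by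
      rw [NNReal.coe_sub hεℓk]; ring
    rwa [e] at h
  have b3 : (ε : ℝ) * f i (ℓi + ε) < (ε : ℝ) * f k (ℓk - ε) :=
    mul_lt_mul_of_pos_left keylt (by exact_mod_cast hε0)
  have final : Φ s1 < Φ s := by
    rw [hΦ]
    simp only []
    rw [esum s1, esum s, li1, lk1, erest]
    linarith
  exact absurd (hsmin hs1D) (not_le.2 final)


end Aux

/-- Comparative statics: fix a game with continuous
nondecreasing cost functions, a type `R₀`, and let `H` be the (well-defined)
cost of resource `j` in Nash equilibrium of the game in which the mass of
type `R₀` is `m` (all other masses fixed). Then `H` is continuous and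
nondecreasing, and if `f j` is `K`-Lipschitz then so is `H`. -/
theorem comparative_statics (n : ℕ) (f : Fin n → ℝ≥0 → ℝ)
    (hmono : ∀ j, Monotone (f j)) (hcont : ∀ j, Continuous (f j))
    (R₀ : Finset (Fin n)) (hR₀ : R₀.Nonempty)
    (μ : Finset (Fin n) → ℝ≥0) (j : Fin n) (H : ℝ≥0 → ℝ)
    (hH : ∀ m : ℝ≥0, ∀ s : Finset (Fin n) → Fin n → ℝ≥0,
      IsNash n f (Function.update μ R₀ m) s → cost n f s j = H m) :
    (Continuous H ∧ Monotone H) ∧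
    (∀ K : ℝ≥0, LipschitzWith K (f j) → LipschitzWith K H) := by
  classical
  have hmupd : ∀ (m m' : ℝ≥0), m ≤ m' → ∀ R : Finset (Fin n), R.Nonempty →
      Function.update μ R₀ m R ≤ Function.update μ R₀ m' R := by
    intro m m' h R _
    by_cases hR : R = R₀
    · subst hR; simpa using h
    · simp [Function.update_of_ne hR]
  have hMono : Monotone H := by
    intro m m' hm
    obtain ⟨s, hs⟩ := exists_nash hmono hcont (Function.update μ R₀ m)
    obtain ⟨s', hs'⟩ := exists_nash hmono hcont (Function.update μ R₀ m')
    rw [← hH m s hs, ← hH m' s' hs']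
    exact cost_mono hmono hs hs' (hmupd m m' hm) j
  have hKey2 : ∀ (m m' : ℝ≥0) (s : Finset (Fin n) → Fin n → ℝ≥0),
      IsNash n f (Function.update μ R₀ m) s →
      ∃ ℓ' : ℝ≥0, H m' = f j ℓ' ∧ dist ℓ' (load n s j) ≤ dist m' m := by
    intro m m' s hs
    obtain ⟨s', hs'⟩ := exists_nash hmono hcont (Function.update μ R₀ m')
    rcases le_total m m' with h | h
    · by_cases hcc : cost n f s j < cost n f s' j
      · obtain ⟨h1, h2⟩ := load_bound hmono h hs hs' hcc
        refine ⟨load n s' j, (hH m' s' hs').symm, ?_⟩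
        rw [NNReal.dist_eq, NNReal.dist_eq,
          abs_of_nonneg (sub_nonneg.2 (NNReal.coe_le_coe.2 h1)),
          abs_of_nonneg (sub_nonneg.2 (NNReal.coe_le_coe.2 h))]
        have h2' : (load n s' j : ℝ) ≤ (load n s j : ℝ) + ((m' : ℝ) - m) := by
          have := NNReal.coe_le_coe.2 h2
          rwa [NNReal.coe_add, NNReal.coe_sub h] at this
        linarith
      · refine ⟨load n s j, ?_, by simpa using dist_nonneg⟩
        have e1 : cost n f s j ≤ cost n f s' j := cost_mono hmono hs hs' (hmupd m m' h) j
        have e2 : cost n f s' j = cost n f s j := le_antisymm (not_lt.1 hcc) e1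
        rw [← hH m' s' hs', e2]; rfl
    · by_cases hcc : cost n f s' j < cost n f s j
      · obtain ⟨h1, h2⟩ := load_bound hmono h hs' hs hcc
        refine ⟨load n s' j, (hH m' s' hs').symm, ?_⟩
        rw [NNReal.dist_eq, NNReal.dist_eq,
          abs_of_nonpos (sub_nonpos.2 (NNReal.coe_le_coe.2 h1)),
          abs_of_nonpos (sub_nonpos.2 (NNReal.coe_le_coe.2 h))]
        have h2' : (load n s j : ℝ) ≤ (load n s' j : ℝ) + ((m : ℝ) - m') := by
          have := NNReal.coe_le_coe.2 h2
          rwa [NNReal.coe_add, NNReal.coe_sub h] at this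
        linarith
      · refine ⟨load n s j, ?_, by simpa using dist_nonneg⟩
        have e1 : cost n f s' j ≤ cost n f s j := cost_mono hmono hs' hs (hmupd m' m h) j
        have e2 : cost n f s' j = cost n f s j := le_antisymm e1 (not_lt.1 hcc)
        rw [← hH m' s' hs', e2]; rfl
  have hCont : Continuous H := by
    rw [continuous_iff_continuousAt]
    intro m
    rw [Metric.continuousAt_iff]
    intro ε hε
    obtain ⟨s, hs⟩ := exists_nash hmono hcont (Function.update μ R₀ m)
    have hHm : H m = f j (load n s j) := (hH m s hs).symm
    obtain ⟨δ, hδ0, hδ⟩ := Metric.continuousAt_iff.1 (hcont j).continuousAt ε hε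
    refine ⟨δ, hδ0, ?_⟩
    intro m' hm'
    obtain ⟨ℓ', e, hd⟩ := hKey2 m m' s hs
    rw [e, hHm]
    exact hδ (lt_of_le_of_lt hd hm')
  refine ⟨⟨hCont, hMono⟩, ?_⟩
  intro K hK
  refine LipschitzWith.of_dist_le_mul fun m' m => ?_
  obtain ⟨s, hs⟩ := exists_nash hmono hcont (Function.update μ R₀ m)
  have hHm : H m = f j (load n s j) := (hH m s hs).symm
  obtain ⟨ℓ', e, hd⟩ := hKey2 m m' s hs
  rw [e, hHm]
  calc dist (f j ℓ') (f j (load n s j)) ≤ K * dist ℓ' (load n s j) := hK.dist_le_mul _ _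
    _ ≤ K * dist m' m := by
        exact mul_le_mul_of_nonneg_left hd K.coe_nonneg
end
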